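/- Define f_O : (0, π/2) → ℝ by f_O(δ) = −4 sin²(2δ) / ((cos 2δ − 3)(cos 2δ + 5)); equivalently, with T = tan δ, f_O(δ) = 4T²/((1 + 2T²)(3 + 2T²)). Then for all δ ∈ (0, π/2) one has f_O(δ) ≤ 2 − √3 = (√3 − 1)²/2, with equality if and only if tan δ = 3^{1/4}/√2. -/

import Mathlib

noncomputable section

open Real

/-- The squared distance between two neighboring tangent lines in the δ-rotation
process for the octahedron/cube pair. -/
def fO (δ : ℝ) : ℝ :=
  -4 * Real.sin (2 * δ) ^ 2 / ((Real.cos (2 * δ) - 3) * (Real.cos (2 * δ) + 5))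

set_option maxHeartbeats 1000000 in
theorem stmt5 :
    ∀ δ ∈ Set.Ioo (0 : ℝ) (π / 2),
      (fO δ = 4 * Real.tan δ ^ 2 /
          ((1 + 2 * Real.tan δ ^ 2) * (3 + 2 * Real.tan δ ^ 2))) ∧
      ((2 : ℝ) - Real.sqrt 3 = (Real.sqrt 3 - 1) ^ 2 / 2) ∧
      fO δ ≤ 2 - Real.sqrt 3 ∧
      (fO δ = 2 - Real.sqrt 3 ↔
        Real.tan δ = (3 : ℝ) ^ ((1 : ℝ) / 4) / Real.sqrt 2) := by
  intro δ ⟨hδ0, hδ1⟩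
  have hπ := Real.pi_pos
  have hc : 0 < Real.cos δ := Real.cos_pos_of_mem_Ioo ⟨by linarith, hδ1⟩
  have hs : 0 < Real.sin δ := Real.sin_pos_of_pos_of_lt_pi hδ0 (by linarith)
  have hpy : Real.sin δ ^ 2 + Real.cos δ ^ 2 = 1 := Real.sin_sq_add_cos_sq δ
  have ht : Real.tan δ = Real.sin δ / Real.cos δ := Real.tan_eq_sin_div_cos δ
  have hTpos : 0 < Real.tan δ := by rw [ht]; positivity
  have hr : Real.sqrt 3 ^ 2 = 3 := Real.sq_sqrt (by norm_num)
  have hr1 : 1 < Real.sqrt 3 := by nlinarith [Real.sqrt_nonneg 3]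
  have hr2 : Real.sqrt 3 < 2 := by nlinarith [Real.sqrt_nonneg 3]
  set T := Real.tan δ with hT
  -- Part 1: formula in terms of tan
  have heq1 : fO δ = 4 * T ^ 2 / ((1 + 2 * T ^ 2) * (3 + 2 * T ^ 2)) := by
    have h2 : Real.cos (2 * δ) = 2 * Real.cos δ ^ 2 - 1 := Real.cos_two_mul δ
    have h3 : Real.sin (2 * δ) = 2 * Real.sin δ * Real.cos δ := Real.sin_two_mul δ
    have hc2 : Real.cos δ ≠ 0 := ne_of_gt hc
    have hcle : Real.cos δ ^ 2 ≤ 1 := by nlinarith [sq_nonneg (Real.sin δ)]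
    have hd1 : (2 * Real.cos δ ^ 2 - 1 - 3) ≠ 0 := by nlinarith
    have hd2 : (2 * Real.cos δ ^ 2 - 1 + 5) ≠ 0 := by nlinarith
    have hd3 : (1 + 2 * T ^ 2) ≠ 0 := by nlinarith [sq_nonneg T]
    have hd4 : (3 + 2 * T ^ 2) ≠ 0 := by nlinarith [sq_nonneg T]
    rw [fO, h2, h3, ht]
    field_simp
    linear_combination (-16 *
      (Real.sin δ ^ 2 + Real.cos δ ^ 2 + 1)) * hpy
  have hD : (0:ℝ) < (1 + 2 * T ^ 2) * (3 + 2 * T ^ 2) := by nlinarith [sq_nonneg T]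
  refine ⟨heq1, by nlinarith, ?_, ?_⟩
  · -- inequality
    rw [heq1, div_le_iff₀ hD]
    nlinarith [sq_nonneg (T ^ 2 - Real.sqrt 3 / 2), sq_nonneg T]
  · -- equality case
    have ha : ((3 : ℝ) ^ ((1 : ℝ) / 4) / Real.sqrt 2) ^ 2 = Real.sqrt 3 / 2 := by
      rw [div_pow, Real.sq_sqrt (by norm_num : (0:ℝ) ≤ 2)]
      congr 1
      rw [← Real.rpow_natCast ((3:ℝ) ^ ((1:ℝ)/4)) 2, ← Real.rpow_mul (by norm_num : (0:ℝ) ≤ 3),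
        Real.sqrt_eq_rpow]
      norm_num
    have hapos : 0 < (3 : ℝ) ^ ((1 : ℝ) / 4) / Real.sqrt 2 :=
      div_pos (Real.rpow_pos_of_pos (by norm_num) _) (Real.sqrt_pos.mpr (by norm_num))
    constructor
    · intro h
      rw [heq1, div_eq_iff (ne_of_gt hD)] at h
      have h4 : 4 * (2 - Real.sqrt 3) * (T ^ 2 - Real.sqrt 3 / 2) ^ 2 = 0 := by
        linear_combination -h + (4 * T ^ 2 + 2 - Real.sqrt 3) * hr
      have h5 : (T ^ 2 - Real.sqrt 3 / 2) ^ 2 = 0 := by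
        have : (4 : ℝ) * (2 - Real.sqrt 3) ≠ 0 := ne_of_gt (by nlinarith)
        exact (mul_eq_zero.mp h4).resolve_left this
      have hT2 : T ^ 2 = Real.sqrt 3 / 2 := by
        have := sq_eq_zero_iff.mp h5
        linarith
      have hsq : T ^ 2 = ((3 : ℝ) ^ ((1 : ℝ) / 4) / Real.sqrt 2) ^ 2 := by rw [ha, hT2]
      have h6 : (T - (3 : ℝ) ^ ((1 : ℝ) / 4) / Real.sqrt 2) *
          (T + (3 : ℝ) ^ ((1 : ℝ) / 4) / Real.sqrt 2) = 0 := by linear_combination hsq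
      rcases mul_eq_zero.mp h6 with h7 | h7
      · linarith
      · linarith
    · intro h
      rw [heq1, h, ha, div_eq_iff (ne_of_gt (show (0:ℝ) < (1 + 2 * (Real.sqrt 3 / 2)) * (3 + 2 * (Real.sqrt 3 / 2)) by positivity))]
      linear_combination (Real.sqrt 3 + 2) * hr
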